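/- Let T ∈ ℝ^{n×n}, k ≥ 1, ε > 0, and let x* be a unit vector attaining ‖T^k x*‖ = ‖T^k‖. If x₁ is a unit vector with ‖x* − x₁‖ ≤ (ε / ‖T^k‖^(1/k))^k (assuming T^k ≠ 0), then ‖T^k‖^(1/k) − ‖T^k x₁‖^(1/k) ≤ ε. -/
import Mathlib

open Matrix

theorem real_rpow_add_le_add_rpow {p : ℝ} (a b : ℝ) (ha : 0 ≤ a) (hb : 0 ≤ b)
    (hp : 0 ≤ p) (hp1 : p ≤ 1) : (a + b) ^ p ≤ a ^ p + b ^ p := by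
  have h := NNReal.rpow_add_le_add_rpow a.toNNReal b.toNNReal hp hp1
  have := NNReal.coe_le_coe.2 h
  push_cast at this
  rwa [Real.coe_toNNReal _ ha, Real.coe_toNNReal _ hb] at this

theorem near_maximizer_root_close (n : ℕ) (T : Matrix (Fin n) (Fin n) ℝ)
    (k : ℕ) (hk : 1 ≤ k) (ε : ℝ) (hε : 0 < ε)
    (xstar x₁ : EuclideanSpace ℝ (Fin n))
    (hxstar : ‖xstar‖ = 1) (hx₁ : ‖x₁‖ = 1)
    (hTk : (Matrix.toEuclideanCLM (𝕜 := ℝ) T) ^ k ≠ 0)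
    (hmax : ‖((Matrix.toEuclideanCLM (𝕜 := ℝ) T) ^ k) xstar‖ =
      ‖(Matrix.toEuclideanCLM (𝕜 := ℝ) T) ^ k‖)
    (hclose : ‖xstar - x₁‖ ≤
      (ε / ‖(Matrix.toEuclideanCLM (𝕜 := ℝ) T) ^ k‖ ^ ((1 : ℝ) / k)) ^ k) :
    ‖(Matrix.toEuclideanCLM (𝕜 := ℝ) T) ^ k‖ ^ ((1 : ℝ) / k) -
      ‖((Matrix.toEuclideanCLM (𝕜 := ℝ) T) ^ k) x₁‖ ^ ((1 : ℝ) / k) ≤ ε := by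
  set A := (Matrix.toEuclideanCLM (𝕜 := ℝ) T) ^ k with hA
  set M := ‖A‖ with hM
  set a := ‖A x₁‖ with ha
  have hMpos : 0 < M := norm_pos_iff.2 hTk
  have hk0 : (0:ℝ) < k := by exact_mod_cast hk
  have hp : (0:ℝ) < 1 / k := by positivity
  have hp1 : (1:ℝ) / k ≤ 1 := by
    rw [div_le_one hk0]; exact_mod_cast hk
  have hMp : (M ^ ((1:ℝ)/k)) ^ k = M := by
    rw [← Real.rpow_natCast (M ^ ((1:ℝ)/k)) k, ← Real.rpow_mul hMpos.le,
      one_div, inv_mul_cancel₀ (ne_of_gt hk0), Real.rpow_one]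
  have hMa : M - a ≤ ε ^ k := by
    have h1 : ‖A xstar - A x₁‖ ≤ M * ‖xstar - x₁‖ := by
      rw [← map_sub]; exact A.le_opNorm _
    have h2 : M - a ≤ ‖A xstar - A x₁‖ := by
      have := norm_sub_norm_le (A xstar) (A x₁)
      rwa [hmax] at this
    have h3 : M * ‖xstar - x₁‖ ≤ M * (ε / M ^ ((1:ℝ)/k)) ^ k :=
      mul_le_mul_of_nonneg_left hclose hMpos.le
    have h4 : M * (ε / M ^ ((1:ℝ)/k)) ^ k = ε ^ k := by
      rw [div_pow, hMp]
      field_simp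
    linarith
  rcases le_or_gt M a with h | h
  · have : M ^ ((1:ℝ)/k) ≤ a ^ ((1:ℝ)/k) :=
      Real.rpow_le_rpow hMpos.le h hp.le
    linarith
  · have hsub : M ^ ((1:ℝ)/k) ≤ (M - a) ^ ((1:ℝ)/k) + a ^ ((1:ℝ)/k) := by
      have := real_rpow_add_le_add_rpow (M - a) a (by linarith) (norm_nonneg _) hp.le hp1
      rwa [sub_add_cancel] at this
    have hfin : (M - a) ^ ((1:ℝ)/k) ≤ ε := by
      have h5 : (M - a) ^ ((1:ℝ)/k) ≤ (ε ^ k) ^ ((1:ℝ)/k) :=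
        Real.rpow_le_rpow (by linarith) hMa hp.le
      have h6 : (ε ^ k : ℝ) ^ ((1:ℝ)/k) = ε := by
        rw [← Real.rpow_natCast ε k, ← Real.rpow_mul hε.le,
          mul_one_div, div_self (ne_of_gt hk0), Real.rpow_one]
      linarith
    linarith
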